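/- If a sequence {uₖ} of optimal vectors for A converges to a vector u, then Au ≠ 0. Consequently, the infimum c of ‖Au‖ over all optimal vectors u is strictly positive (provided A ≠ 0). -/

import Mathlib

/-- `u` is optimal for the columns `a`: `u ∈ [0,1]ⁿ`, `‖u‖ = 1`, and no nonnegative `z`
with `Az = Au` has strictly fewer nonzero components than `u`. -/
def IsOptimal {m n : ℕ} (a : Fin n → EuclideanSpace ℝ (Fin m))
    (u : EuclideanSpace ℝ (Fin n)) : Prop :=
  (∀ i, u i ∈ Set.Icc (0:ℝ) 1) ∧ ‖u‖ = 1 ∧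
    ¬ ∃ z : Fin n → ℝ, (∀ i, 0 ≤ z i) ∧ (∑ i, z i • a i) = (∑ i, u i • a i) ∧
      (Finset.univ.filter fun i => z i ≠ 0).card <
        (Finset.univ.filter fun i => u i ≠ 0).card

open Filter Topology

lemma lemA {m n : ℕ} (a : Fin n → EuclideanSpace ℝ (Fin m))
    (u : EuclideanSpace ℝ (Fin n)) (hu : IsOptimal a u)
    (v : Fin n → ℝ) (hv0 : ∀ i, 0 ≤ v i) (hvne : v ≠ 0)
    (hAv : (∑ i, v i • a i) = 0)
    (hsupp : ∀ i, v i ≠ 0 → u i ≠ 0) : False := by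
  obtain ⟨hicc, hnorm, hopt⟩ := hu
  set T : Finset (Fin n) := Finset.univ.filter fun i => v i ≠ 0 with hT
  have hTne : T.Nonempty := by
    rcases Function.ne_iff.1 hvne with ⟨i, hi⟩
    have hi' : v i ≠ 0 := by simpa using hi
    exact ⟨i, by simp [hT, hi']⟩
  have hmemT : ∀ i ∈ T, 0 < v i ∧ 0 < u i := by
    intro i hi
    have hvi : v i ≠ 0 := by simpa [hT] using hi
    have hui : u i ≠ 0 := hsupp i hvi
    exact ⟨lt_of_le_of_ne (hv0 i) (Ne.symm hvi),
      lt_of_le_of_ne (hicc i).1 (Ne.symm hui)⟩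
  set t : ℝ := T.inf' hTne fun i => u i / v i with ht
  have htpos : 0 < t := by
    rw [ht, Finset.lt_inf'_iff]
    intro i hi
    exact div_pos (hmemT i hi).2 (hmemT i hi).1
  set z : Fin n → ℝ := fun i => u i - t * v i with hz
  have hz0 : ∀ i, 0 ≤ z i := by
    intro i
    by_cases hi : i ∈ T
    · have hvi := (hmemT i hi).1
      have h1 : t ≤ u i / v i := Finset.inf'_le _ hi
      have h2 := (le_div_iff₀ hvi).1 h1
      simp only [hz]; linarith
    · have hvi : v i = 0 := by
        by_contra h; exact hi (by simp [hT, h])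
      simp [hz, hvi, (hicc i).1]
  have hsum : (∑ i, z i • a i) = (∑ i, u i • a i) := by
    have h3 : (∑ i, (t * v i) • a i) = t • ∑ i, v i • a i := by
      rw [Finset.smul_sum]; simp [smul_smul]
    simp only [hz, sub_smul, Finset.sum_sub_distrib, h3, hAv, smul_zero, sub_zero]
  obtain ⟨j, hjT, hj⟩ := Finset.exists_mem_eq_inf' hTne fun i => u i / v i
  have hzj : z j = 0 := by
    have hvj := (hmemT j hjT).1
    show u j - t * v j = 0
    rw [ht, hj, div_mul_cancel₀ _ hvj.ne', sub_self]
  refine hopt ⟨z, hz0, hsum, Finset.card_lt_card ?_⟩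
  constructor
  · intro i hi
    simp only [Finset.mem_filter, Finset.mem_univ, true_and] at hi ⊢
    intro hui
    apply hi
    have hvi : v i = 0 := by
      by_contra h; exact hsupp i h hui
    simp [hz, hvi, hui]
  · intro hsub
    have huj : u j ≠ 0 := (hmemT j hjT).2.ne'
    have hjmem : j ∈ Finset.univ.filter fun i => u i ≠ 0 := by simp [huj]
    have := hsub hjmem
    simp [hzj] at this

lemma lemB {m n : ℕ} (a : Fin n → EuclideanSpace ℝ (Fin m))
    (u : ℕ → EuclideanSpace ℝ (Fin n)) (l : EuclideanSpace ℝ (Fin n))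
    (hopt : ∀ k, IsOptimal a (u k)) (hto : Tendsto u atTop (𝓝 l)) :
    (∑ i, l i • a i) ≠ 0 := by
  intro hAl
  have hic : ∀ i, Tendsto (fun k => u k i) atTop (𝓝 (l i)) := fun i =>
    ((EuclideanSpace.proj (𝕜 := ℝ) i).continuous.tendsto l).comp hto
  have hl0 : ∀ i, 0 ≤ l i := fun i =>
    le_of_tendsto_of_tendsto tendsto_const_nhds (hic i)
      (Eventually.of_forall fun k => ((hopt k).1 i).1)
  have hnorm : ‖l‖ = 1 := by
    have h1 : Tendsto (fun k => ‖u k‖) atTop (𝓝 ‖l‖) :=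
      (continuous_norm.tendsto l).comp hto
    have h2 : Tendsto (fun k => ‖u k‖) atTop (𝓝 1) := by
      have : (fun k => ‖u k‖) = fun _ => (1:ℝ) := funext fun k => (hopt k).2.1
      rw [this]; exact tendsto_const_nhds
    exact tendsto_nhds_unique h1 h2
  have hlne : l ≠ 0 := fun h => by rw [h] at hnorm; simp at hnorm
  have hev : ∀ᶠ k in atTop, ∀ i, l i ≠ 0 → u k i ≠ 0 := by
    rw [eventually_all]
    intro i
    by_cases hli : l i = 0
    · filter_upwards with k h; exact absurd hli h
    · have hpos : 0 < l i := lt_of_le_of_ne (hl0 i) (Ne.symm hli)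
      have : ∀ᶠ k in atTop, l i / 2 < u k i :=
        (hic i).eventually (eventually_gt_nhds (by linarith))
      filter_upwards [this] with k hk
      exact fun _ => (lt_trans (half_pos hpos) hk).ne'
  obtain ⟨k, hk⟩ := hev.exists
  exact lemA a (u k) (hopt k) (fun i => l i) hl0
    (fun h => hlne (PiLp.ext fun i => by simpa using congrFun h i)) hAl hk

theorem limit_of_optimal_ne_zero_and_inf_pos (m n : ℕ)
    (a : Fin n → EuclideanSpace ℝ (Fin m)) (hA : a ≠ 0) :
    (∀ (u : ℕ → EuclideanSpace ℝ (Fin n)) (l : EuclideanSpace ℝ (Fin n)),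
        (∀ k, IsOptimal a (u k)) → Tendsto u atTop (𝓝 l) → (∑ i, l i • a i) ≠ 0) ∧
      0 < sInf {r : ℝ | ∃ u : EuclideanSpace ℝ (Fin n), IsOptimal a u ∧ r = ‖∑ i, u i • a i‖} := by
  refine ⟨fun u l hopt hto => lemB a u l hopt hto, ?_⟩
  set S : Set ℝ := {r : ℝ | ∃ u : EuclideanSpace ℝ (Fin n), IsOptimal a u ∧ r = ‖∑ i, u i • a i‖}
    with hS
  -- S is nonempty
  obtain ⟨j, hj⟩ := Function.ne_iff.1 hA
  have hj' : a j ≠ 0 := hj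
  have hsingle : ∀ i, EuclideanSpace.single j (1:ℝ) i = if i = j then 1 else 0 := by
    intro i; simp [EuclideanSpace.single_apply]
  have hopt0 : IsOptimal a (EuclideanSpace.single j (1:ℝ)) := by
    refine ⟨fun i => ?_, ?_, ?_⟩
    · rw [hsingle]; split <;> norm_num
    · simp [EuclideanSpace.norm_single]
    · rintro ⟨z, hz0, hzsum, hzcard⟩
      have hsum0 : (∑ i, EuclideanSpace.single j (1:ℝ) i • a i) = a j := by
        simp only [hsingle, ite_smul, one_smul, zero_smul]
        simp
      have hcard : (Finset.univ.filter fun i => EuclideanSpace.single j (1:ℝ) i ≠ 0).card = 1 := by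
        have heq : (Finset.univ.filter fun i => EuclideanSpace.single j (1:ℝ) i ≠ 0) = {j} := by
          ext i; simp [hsingle]
        rw [heq, Finset.card_singleton]
      rw [hcard, Nat.lt_one_iff, Finset.card_eq_zero, Finset.filter_eq_empty_iff] at hzcard
      have hzz : ∀ i, z i = 0 := fun i => by simpa using hzcard (Finset.mem_univ i)
      rw [hsum0] at hzsum
      exact hj' (by rw [← hzsum]; simp [hzz])
  have hSne : S.Nonempty := ⟨_, ⟨_, hopt0, rfl⟩⟩
  have hSbdd : ∀ r ∈ S, 0 ≤ r := by rintro r ⟨u, _, rfl⟩; positivity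
  by_contra hc
  push_neg at hc
  -- build a sequence of optimal vectors with ‖Au_k‖ → 0
  have hsmall : ∀ k : ℕ, ∃ u : EuclideanSpace ℝ (Fin n),
      IsOptimal a u ∧ ‖∑ i, u i • a i‖ < 1 / (k + 1) := by
    intro k
    have hlt : sInf S < 1 / (k + 1) := lt_of_le_of_lt hc (by positivity)
    obtain ⟨r, hrS, hrlt⟩ := exists_lt_of_csInf_lt hSne hlt
    obtain ⟨u, huopt, rfl⟩ := hrS
    exact ⟨u, huopt, hrlt⟩
  choose u huopt husmall using hsmall
  have humem : ∀ k, u k ∈ Metric.sphere (0 : EuclideanSpace ℝ (Fin n)) 1 := fun k =>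
    mem_sphere_zero_iff_norm.2 (huopt k).2.1
  obtain ⟨l, -, φ, hφ, hto⟩ :=
    (isCompact_sphere (0 : EuclideanSpace ℝ (Fin n)) 1).tendsto_subseq humem
  have hF : Continuous fun w : EuclideanSpace ℝ (Fin n) => ∑ i, w i • a i :=
    continuous_finset_sum _ fun i _ =>
      ((EuclideanSpace.proj (𝕜 := ℝ) i).continuous).smul continuous_const
  have h1 : Tendsto (fun k => ‖∑ i, u (φ k) i • a i‖) atTop (𝓝 ‖∑ i, l i • a i‖) :=
    ((continuous_norm.comp hF).tendsto l).comp hto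
  have h2 : Tendsto (fun k => ‖∑ i, u (φ k) i • a i‖) atTop (𝓝 0) := by
    apply squeeze_zero (fun k => norm_nonneg _) (fun k => (husmall (φ k)).le)
    have hmono : Tendsto (fun k : ℕ => ((φ k : ℝ) + 1)) atTop atTop :=
      tendsto_atTop_add_const_right _ 1
        (tendsto_natCast_atTop_atTop.comp hφ.tendsto_atTop)
    simpa [Pi.inv_def] using hmono.inv_tendsto_atTop
  have hzero : (∑ i, l i • a i) = 0 :=
    norm_eq_zero.1 (tendsto_nhds_unique h1 h2)
  exact lemB a (fun k => u (φ k)) l (fun k => huopt (φ k)) hto hzero
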